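/- Let t ≤ k ≤ d and Q ∈ ℕ, and let X be a d-complex which is Q-bounded at dimension k, i.e. every k-face of X is contained in at most Q faces of X(d). Then for every A ⊆ X(t): (1/(Q · binom(d−t, k−t))) · ‖A‖_X ≤ ‖A‖_{X^{(k)}} ≤ Q · binom(d+1, k+1) · ‖A‖_X, where ‖·‖_X is the norm of the d-complex X and ‖·‖_{X^{(k)}} is the norm of the k-complex X^{(k)}. -/

import Mathlib

open Finset
open scoped symmDiff

noncomputable section

namespace HDExpansion

/-- The faces of cardinality `m` (i.e. of dimension `m - 1`) of a complex `X`. -/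
def facesC (X : Finset (Finset ℕ)) (m : ℕ) : Finset (Finset ℕ) :=
  X.filter fun σ => σ.card = m

/-- `X` is a finite, pure, `d`-dimensional abstract simplicial complex:
it is nonempty, closed under subsets, and every face is contained in a face
of cardinality `d + 1`. -/
def IsComplex (X : Finset (Finset ℕ)) (d : ℕ) : Prop :=
  X.Nonempty ∧ (∀ σ ∈ X, ∀ τ ⊆ σ, τ ∈ X) ∧
    ∀ σ ∈ X, ∃ F ∈ X, σ ⊆ F ∧ F.card = d + 1

/-- The weight of a face `σ` in the `d`-complex `X`:
`w(σ) = |{F ∈ X(d) : σ ⊆ F}| / (binom(d+1,|σ|)·|X(d)|)`. -/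
def weightC (X : Finset (Finset ℕ)) (d : ℕ) (σ : Finset ℕ) : ℝ :=
  (((facesC X (d + 1)).filter fun F => σ ⊆ F).card : ℝ) /
    (((d + 1).choose σ.card * (facesC X (d + 1)).card : ℕ) : ℝ)

/-- The norm of a cochain: `‖A‖ = Σ_{σ∈A} w(σ)`. -/
def normC (X : Finset (Finset ℕ)) (d : ℕ) (A : Finset (Finset ℕ)) : ℝ :=
  ∑ σ ∈ A, weightC X d σ

/-- The coboundary map, sending a cochain of faces of cardinality `m`
(dimension `m-1`) to the set of faces of cardinality `m+1` containing an odd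
number of its elements. -/
def cobC (X : Finset (Finset ℕ)) (m : ℕ) (A : Finset (Finset ℕ)) : Finset (Finset ℕ) :=
  (facesC X (m + 1)).filter fun τ => (A.filter fun σ => σ ⊆ τ).card % 2 = 1

/-- `A` (a cochain of faces of cardinality `m`, i.e. dimension `m-1`) is a
coboundary: `A ∈ B^{m-1}`. -/
def IsCobound (X : Finset (Finset ℕ)) (m : ℕ) (A : Finset (Finset ℕ)) : Prop :=
  ∃ γ ⊆ facesC X (m - 1), cobC X (m - 1) γ = A

/-- `A` (a cochain of faces of cardinality `m`, i.e. dimension `m-1`) is a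
cocycle: `A ∈ Z^{m-1}`. -/
def IsCocycle (X : Finset (Finset ℕ)) (m : ℕ) (A : Finset (Finset ℕ)) : Prop :=
  A ⊆ facesC X m ∧ cobC X m A = ∅

/-- `min_{b ∈ B^{m-1}} ‖A + b‖` (cochain sum is symmetric difference `∆`). -/
def distB (X : Finset (Finset ℕ)) (d m : ℕ) (A : Finset (Finset ℕ)) : ℝ :=
  sInf {r : ℝ | ∃ b, IsCobound X m b ∧ r = normC X d (A ∆ b)}

/-- `min_{z ∈ Z^{m-1}} ‖A + z‖` (cochain sum is symmetric difference `∆`). -/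
def distZ (X : Finset (Finset ℕ)) (d m : ℕ) (A : Finset (Finset ℕ)) : ℝ :=
  sInf {r : ℝ | ∃ z, IsCocycle X m z ∧ r = normC X d (A ∆ z)}

/-- The link `X_σ = {τ : σ ∩ τ = ∅, σ ∪ τ ∈ X}`. -/
def link (X : Finset (Finset ℕ)) (σ : Finset ℕ) : Finset (Finset ℕ) :=
  (X.filter fun ρ => σ ⊆ ρ).image fun ρ => ρ \ σ

/-- The localization `I_σ(A) = {τ ∈ X_σ : τ ∪ σ ∈ A}`. -/
def locF (σ : Finset ℕ) (A : Finset (Finset ℕ)) : Finset (Finset ℕ) :=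
  (A.filter fun ρ => σ ⊆ ρ).image fun ρ => ρ \ σ

/-- The lifting `I^σ(A) = {τ ∪ σ : τ ∈ A}`. -/
def liftF (σ : Finset ℕ) (A : Finset (Finset ℕ)) : Finset (Finset ℕ) :=
  A.image fun τ => τ ∪ σ

/-- A cochain of faces of cardinality `m` is minimal if `‖A‖ ≤ ‖A + b‖` for
every coboundary `b`. -/
def IsMinimal (Y : Finset (Finset ℕ)) (dY m : ℕ) (A : Finset (Finset ℕ)) : Prop :=
  ∀ b, IsCobound Y m b → normC Y dY A ≤ normC Y dY (A ∆ b)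

/-- A cochain of faces of cardinality `m` is locally minimal if all its
localizations to links of nonempty faces are minimal. -/
def IsLocallyMinimal (X : Finset (Finset ℕ)) (d m : ℕ) (A : Finset (Finset ℕ)) : Prop :=
  ∀ σ ∈ X, σ ≠ ∅ → IsMinimal (link X σ) (d - σ.card) (m - σ.card) (locF σ A)

/-- `Y` (a `dY`-complex) is a `β`-coboundary expander: for every dimension
`k = m - 1` with `0 ≤ k ≤ dY - 1` and every `k`-cochain `A ∉ B^k`,
`‖δA‖ ≥ β · min_{b ∈ B^k} ‖A+b‖`. -/
def CobExpander (Y : Finset (Finset ℕ)) (dY : ℕ) (β : ℝ) : Prop :=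
  ∀ m : ℕ, 1 ≤ m → m ≤ dY → ∀ A ⊆ facesC Y m, ¬ IsCobound Y m A →
    β * distB Y dY m A ≤ normC Y dY (cobC Y m A)

/-- `E(A,A)`: the edges of `Y` with both vertices in the vertex set `A`
(vertices are identified with singleton faces). -/
def edgesIn (Y : Finset (Finset ℕ)) (A : Finset (Finset ℕ)) : Finset (Finset ℕ) :=
  (facesC Y 2).filter fun e => ∀ v ∈ e, ({v} : Finset ℕ) ∈ A

/-- `Y` (a `dY`-complex) is an `α`-skeleton expander. -/
def SkelExpander (Y : Finset (Finset ℕ)) (dY : ℕ) (α : ℝ) : Prop :=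
  ∀ A ⊆ facesC Y 1, normC Y dY (edgesIn Y A) ≤ 4 * (normC Y dY A ^ 2 + α * normC Y dY A)

/-- The `m`-skeleton of a complex (all faces of dimension at most `m`). -/
def skeleton (X : Finset (Finset ℕ)) (m : ℕ) : Finset (Finset ℕ) :=
  X.filter fun σ => σ.card ≤ m + 1


lemma swap_sum7 (S T : Finset (Finset ℕ)) :
    ∑ F ∈ S, (T.filter fun G => G ⊆ F).card = ∑ G ∈ T, (S.filter fun F => G ⊆ F).card := by
  simp only [Finset.card_filter]
  exact Finset.sum_comm

lemma card_between7 (k : ℕ) (X : Finset (Finset ℕ))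
    (hdc : ∀ σ ∈ X, ∀ τ ⊆ σ, τ ∈ X)
    (σ : Finset ℕ) (hs : σ.card ≤ k + 1) (F : Finset ℕ) (hF : F ∈ X) (hσF : σ ⊆ F) :
    (((facesC X (k+1)).filter fun G => σ ⊆ G).filter fun G => G ⊆ F).card
      = (F.card - σ.card).choose (k + 1 - σ.card) := by
  have key : (((facesC X (k+1)).filter fun G => σ ⊆ G).filter fun G => G ⊆ F).card
      = ((F \ σ).powersetCard (k + 1 - σ.card)).card := by
    apply Finset.card_nbij' (fun G => G \ σ) (fun τ => τ ∪ σ)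
    · intro G hG
      simp only [Finset.mem_coe, facesC, Finset.mem_filter, Finset.mem_powersetCard] at hG ⊢
      obtain ⟨⟨⟨hGX, hGc⟩, hσG⟩, hGF⟩ := hG
      exact ⟨Finset.sdiff_subset_sdiff hGF le_rfl, by rw [Finset.card_sdiff_of_subset hσG, hGc]⟩
    · intro τ hτ
      simp only [Finset.mem_coe, Finset.mem_powersetCard] at hτ
      obtain ⟨hτF, hτc⟩ := hτ
      have hdisj : Disjoint τ σ := Finset.sdiff_disjoint.mono_left hτF
      have hsub : τ ∪ σ ⊆ F :=
        Finset.union_subset (hτF.trans (Finset.sdiff_subset)) hσF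
      have hcard : (τ ∪ σ).card = k + 1 := by
        rw [Finset.card_union_of_disjoint hdisj, hτc]; omega
      simp only [Finset.mem_coe, facesC, Finset.mem_filter]
      exact ⟨⟨⟨hdc F hF _ hsub, hcard⟩, Finset.subset_union_right⟩, hsub⟩
    · intro G hG
      simp only [Finset.mem_coe, Finset.mem_filter] at hG
      exact Finset.sdiff_union_of_subset hG.1.2
    · intro τ hτ
      simp only [Finset.mem_coe, Finset.mem_powersetCard] at hτ
      have hdisj : Disjoint τ σ := Finset.sdiff_disjoint.mono_left hτ.1
      show (τ ∪ σ) \ σ = τ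
      rw [Finset.union_sdiff_distrib, Finset.sdiff_self, Finset.union_empty,
        Finset.sdiff_eq_self_of_disjoint hdisj]
  rw [key, Finset.card_powersetCard, Finset.card_sdiff_of_subset hσF]

lemma count_eq7 (d k : ℕ) (X : Finset (Finset ℕ))
    (hdc : ∀ σ ∈ X, ∀ τ ⊆ σ, τ ∈ X)
    (σ : Finset ℕ) (hs : σ.card ≤ k + 1) :
    ∑ G ∈ (facesC X (k+1)).filter (fun G => σ ⊆ G),
        (((facesC X (d+1)).filter fun F => σ ⊆ F).filter fun F => G ⊆ F).card
      = ((facesC X (d+1)).filter fun F => σ ⊆ F).card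
          * (d + 1 - σ.card).choose (k + 1 - σ.card) := by
  rw [← swap_sum7]
  have h : ∀ F ∈ (facesC X (d+1)).filter (fun F => σ ⊆ F),
      (((facesC X (k+1)).filter fun G => σ ⊆ G).filter fun G => G ⊆ F).card
        = (d + 1 - σ.card).choose (k + 1 - σ.card) := by
    intro F hF
    simp only [facesC, Finset.mem_filter] at hF
    rw [card_between7 k X hdc σ hs F hF.1.1 hF.2, hF.1.2]
  rw [Finset.sum_congr rfl h, Finset.sum_const, smul_eq_mul]

lemma count_upper7 (d k Q : ℕ) (X : Finset (Finset ℕ))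
    (hdc : ∀ σ ∈ X, ∀ τ ⊆ σ, τ ∈ X)
    (hQ : ∀ σ ∈ facesC X (k + 1), ((facesC X (d + 1)).filter fun F => σ ⊆ F).card ≤ Q)
    (σ : Finset ℕ) (hs : σ.card ≤ k + 1) :
    ((facesC X (d+1)).filter fun F => σ ⊆ F).card
        * (d + 1 - σ.card).choose (k + 1 - σ.card)
      ≤ Q * ((facesC X (k+1)).filter fun G => σ ⊆ G).card := by
  rw [← count_eq7 d k X hdc σ hs]
  calc ∑ G ∈ (facesC X (k+1)).filter (fun G => σ ⊆ G),
        (((facesC X (d+1)).filter fun F => σ ⊆ F).filter fun F => G ⊆ F).card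
      ≤ ∑ _G ∈ (facesC X (k+1)).filter (fun G => σ ⊆ G), Q := by
        apply Finset.sum_le_sum
        intro G hG
        have hG' : G ∈ facesC X (k+1) := (Finset.mem_filter.mp hG).1
        refine le_trans (Finset.card_le_card ?_) (hQ G hG')
        intro F hF
        simp only [Finset.mem_filter] at hF ⊢
        exact ⟨hF.1.1, hF.2⟩
    _ = ((facesC X (k+1)).filter fun G => σ ⊆ G).card * Q := by
        rw [Finset.sum_const, smul_eq_mul]
    _ = Q * ((facesC X (k+1)).filter fun G => σ ⊆ G).card := Nat.mul_comm _ _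

lemma count_lower7 (d k : ℕ) (X : Finset (Finset ℕ))
    (hdc : ∀ σ ∈ X, ∀ τ ⊆ σ, τ ∈ X)
    (hpure : ∀ σ ∈ X, ∃ F ∈ X, σ ⊆ F ∧ F.card = d + 1)
    (σ : Finset ℕ) (hs : σ.card ≤ k + 1) :
    ((facesC X (k+1)).filter fun G => σ ⊆ G).card
      ≤ ((facesC X (d+1)).filter fun F => σ ⊆ F).card
          * (d + 1 - σ.card).choose (k + 1 - σ.card) := by
  rw [← count_eq7 d k X hdc σ hs]
  calc ((facesC X (k+1)).filter fun G => σ ⊆ G).card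
      = ∑ _G ∈ (facesC X (k+1)).filter (fun G => σ ⊆ G), 1 := by
        rw [Finset.sum_const, smul_eq_mul, Nat.mul_one]
    _ ≤ ∑ G ∈ (facesC X (k+1)).filter (fun G => σ ⊆ G),
        (((facesC X (d+1)).filter fun F => σ ⊆ F).filter fun F => G ⊆ F).card := by
        apply Finset.sum_le_sum
        intro G hG
        simp only [facesC, Finset.mem_filter] at hG
        obtain ⟨⟨hGX, hGc⟩, hσG⟩ := hG
        obtain ⟨F, hFX, hGF, hFc⟩ := hpure G hGX
        refine Nat.one_le_iff_ne_zero.mpr (Finset.card_ne_zero_of_mem (a := F) ?_)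
        simp only [facesC, Finset.mem_filter]
        exact ⟨⟨⟨hFX, hFc⟩, hσG.trans hGF⟩, hGF⟩

/-- Comparison of the norms of `X` and of its `k`-skeleton
for a complex which is `Q`-bounded at dimension `k`. -/
theorem statement_7 (d t k Q : ℕ) (htk : t ≤ k) (hkd : k ≤ d)
    (X : Finset (Finset ℕ)) (hX : IsComplex X d)
    (hQ : ∀ σ ∈ facesC X (k + 1), ((facesC X (d + 1)).filter fun F => σ ⊆ F).card ≤ Q)
    (A : Finset (Finset ℕ)) (hA : A ⊆ facesC X (t + 1)) :
    (1 / ((Q * (d - t).choose (k - t) : ℕ) : ℝ)) * normC X d A ≤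
        normC (skeleton X k) k A ∧
      normC (skeleton X k) k A ≤ ((Q * (d + 1).choose (k + 1) : ℕ) : ℝ) * normC X d A := by
  obtain ⟨hne, hdc, hpure⟩ := hX
  set c1 := (d - t).choose (k - t) with hc1def
  set c2 := (d + 1).choose (k + 1) with hc2def
  set c3 := (k + 1).choose (t + 1) with hc3def
  set c4 := (d + 1).choose (t + 1) with hc4def
  set D := (facesC X (d + 1)).card with hDdef
  set K := (facesC X (k + 1)).card with hKdef
  -- basic positivity
  obtain ⟨σ₀, hσ₀⟩ := hne
  obtain ⟨F₀, hF₀X, _, hF₀c⟩ := hpure σ₀ hσ₀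
  have hDpos : 0 < D := Finset.card_pos.mpr ⟨F₀, by simp [facesC, hF₀X, hF₀c]⟩
  obtain ⟨G₀, hG₀F, hG₀c⟩ := Finset.exists_subset_card_eq
    (show k + 1 ≤ F₀.card by omega)
  have hG₀X : G₀ ∈ X := hdc F₀ hF₀X G₀ hG₀F
  have hG₀ : G₀ ∈ facesC X (k + 1) := by simp [facesC, hG₀X, hG₀c]
  have hKpos : 0 < K := Finset.card_pos.mpr ⟨G₀, hG₀⟩
  have hQpos : 0 < Q := by
    obtain ⟨F₁, hF₁X, hGF₁, hF₁c⟩ := hpure G₀ hG₀X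
    have : 0 < ((facesC X (d + 1)).filter fun F => G₀ ⊆ F).card :=
      Finset.card_pos.mpr ⟨F₁, by simp [facesC, hF₁X, hF₁c, hGF₁]⟩
    exact lt_of_lt_of_le this (hQ G₀ hG₀)
  have hc1pos : 0 < c1 := Nat.choose_pos (by omega)
  have hc2pos : 0 < c2 := Nat.choose_pos (by omega)
  have hc3pos : 0 < c3 := Nat.choose_pos (by omega)
  have hc4pos : 0 < c4 := Nat.choose_pos (by omega)
  -- choose identity
  have hid : c4 * c1 = c2 * c3 := by
    have h := Nat.choose_mul (n := d + 1) (k := k + 1) (s := t + 1)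
      (by omega)
    simp only [Nat.succ_sub_succ] at h
    exact h.symm
  -- global counts at σ = ∅
  have hempty : ∀ (m : ℕ), (facesC X m).filter (fun F => (∅ : Finset ℕ) ⊆ F) = facesC X m :=
    fun m => Finset.filter_true_of_mem (fun _ _ => Finset.empty_subset _)
  have h3 : D * c2 ≤ Q * K := by
    have := count_upper7 d k Q X hdc hQ ∅ (by simp)
    simpa [hempty, hc2def] using this
  have h2 : K ≤ D * c2 := by
    have := count_lower7 d k X hdc hpure ∅ (by simp)
    simpa [hempty, hc2def] using this
  -- skeleton faces
  have hfk : facesC (skeleton X k) (k + 1) = facesC X (k + 1) := by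
    ext G
    simp only [facesC, skeleton, Finset.filter_filter, Finset.mem_filter]
    exact ⟨fun h => ⟨h.1, h.2.2⟩, fun h => ⟨h.1, h.2.le, h.2⟩⟩
  -- pointwise bounds
  have hpt : ∀ σ ∈ A,
      (1 / ((Q * c1 : ℕ) : ℝ)) * weightC X d σ ≤ weightC (skeleton X k) k σ ∧
      weightC (skeleton X k) k σ ≤ ((Q * c2 : ℕ) : ℝ) * weightC X d σ := by
    intro σ hσ
    have hσ' := Finset.mem_filter.mp (hA hσ)
    obtain ⟨hσX, hσc⟩ := hσ'
    set a := ((facesC X (d + 1)).filter fun F => σ ⊆ F).card with hadef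
    set b := ((facesC X (k + 1)).filter fun F => σ ⊆ F).card with hbdef
    have hσk : σ.card ≤ k + 1 := by omega
    have h1 : a * c1 ≤ Q * b := by
      have := count_upper7 d k Q X hdc hQ σ hσk
      simpa [hσc, Nat.succ_sub_succ, hc1def] using this
    have h4 : b ≤ a * c1 := by
      have := count_lower7 d k X hdc hpure σ hσk
      simpa [hσc, Nat.succ_sub_succ, hc1def] using this
    have hwx : weightC X d σ = (a : ℝ) / ((c4 * D : ℕ) : ℝ) := by
      rw [weightC, hσc]
    have hws : weightC (skeleton X k) k σ = (b : ℝ) / ((c3 * K : ℕ) : ℝ) := by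
      rw [weightC, hfk, hσc]
    have hden1 : (0 : ℝ) < ((c4 * D : ℕ) : ℝ) := by
      exact_mod_cast Nat.mul_pos hc4pos hDpos
    have hden2 : (0 : ℝ) < ((c3 * K : ℕ) : ℝ) := by
      exact_mod_cast Nat.mul_pos hc3pos hKpos
    have hden3 : (0 : ℝ) < ((Q * c1 : ℕ) : ℝ) := by
      exact_mod_cast Nat.mul_pos hQpos hc1pos
    rw [hwx, hws]
    constructor
    · rw [one_div, inv_mul_eq_div, div_div, div_le_div_iff₀ (by positivity) hden2]
      have hnat : a * (c3 * K) ≤ b * (c4 * D * (Q * c1)) := by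
        calc a * (c3 * K) ≤ a * (c3 * (D * c2)) := by
              exact Nat.mul_le_mul_left a (Nat.mul_le_mul_left c3 h2)
          _ = a * D * (c2 * c3) := by ring
          _ = a * D * (c4 * c1) := by rw [hid]
          _ = (a * c1) * (c4 * D) := by ring
          _ ≤ (Q * b) * (c4 * D) := Nat.mul_le_mul_right _ h1
          _ = b * (c4 * D * Q) := by ring
          _ ≤ b * (c4 * D * (Q * c1)) := by
              refine Nat.mul_le_mul_left b (Nat.mul_le_mul_left _ ?_)
              exact Nat.le_mul_of_pos_right Q hc1pos
      calc (a : ℝ) * ((c3 * K : ℕ) : ℝ) ≤ (b : ℝ) * ((c4 * D : ℕ) * (Q * c1) : ℕ) := by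
            exact_mod_cast hnat
        _ = (b : ℝ) * (((c4 * D : ℕ) : ℝ) * ((Q * c1 : ℕ) : ℝ)) := by push_cast; ring
    · rw [mul_div_assoc', div_le_div_iff₀ hden2 hden1]
      have hnat : b * (c4 * D) ≤ (Q * c2) * a * (c3 * K) := by
        calc b * (c4 * D) ≤ (a * c1) * (c4 * D) := Nat.mul_le_mul_right _ h4
          _ = a * (c4 * c1) * D := by ring
          _ = a * (c2 * c3) * D := by rw [hid]
          _ = (a * c3) * (D * c2) := by ring
          _ ≤ (a * c3) * (Q * K) := Nat.mul_le_mul_left _ h3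
          _ = (Q * 1 * a) * (c3 * K) := by ring
          _ ≤ (Q * c2 * a) * (c3 * K) := by
              refine Nat.mul_le_mul_right _ (Nat.mul_le_mul_right a ?_)
              exact Nat.mul_le_mul_left Q hc2pos
      calc (b : ℝ) * ((c4 * D : ℕ) : ℝ) ≤ (((Q * c2) * a * (c3 * K) : ℕ) : ℝ) := by
            exact_mod_cast hnat
        _ = ((Q * c2 : ℕ) : ℝ) * (a : ℝ) * ((c3 * K : ℕ) : ℝ) := by push_cast; ring
  constructor
  · rw [normC, normC, Finset.mul_sum]
    exact Finset.sum_le_sum fun σ hσ => (hpt σ hσ).1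
  · rw [normC, normC, Finset.mul_sum]
    exact Finset.sum_le_sum fun σ hσ => (hpt σ hσ).2

end HDExpansion
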